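/- For every integer n ≥ 1, Λ_n = (1/2)·log(2π) + u_n, where u_n := (−1)^n·[ Σ_{m=1}^n (−1)^m·A_{nm}·log( |B_{2m}| / (2m−3)!! ) + (1/(2A_{n0}))·log(2π) ]. -/

import Mathlib

set_option maxHeartbeats 1000000


open Complex Finset Real

/-- The completed zeta function `2ξ(x) := x(x-1)·π^(-x/2)·Γ(x/2)·ζ(x)`. -/
noncomputable def twoXi (x : ℂ) : ℂ :=
  x * (x - 1) * (Real.pi : ℂ) ^ (-x / 2) * Complex.Gamma (x / 2) * riemannZeta x

/-- The coefficient `A_{nm} := Γ(n+m+1/2) / ((2m-1)·(n-m)!·m!·Γ(m+1/2))`. -/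
noncomputable def Acoef (n m : ℕ) : ℝ :=
  Real.Gamma ((n : ℝ) + m + 1 / 2) /
    ((2 * (m : ℝ) - 1) * (Nat.factorial (n - m) : ℝ) * (Nat.factorial m : ℝ) *
      Real.Gamma ((m : ℝ) + 1 / 2))

/-- The discretized Keiper coefficient
`Λ_n := (-1)^n · Σ_{m=1}^n (-1)^m · A_{nm} · log(2ξ(2m))` (real logarithm). -/
noncomputable def LambdaSeq (n : ℕ) : ℝ :=
  (-1 : ℝ) ^ n * ∑ m ∈ Finset.Icc 1 n, (-1 : ℝ) ^ m * Acoef n m *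
    Real.log ((twoXi (2 * m)).re)

/-- The odd double factorial `(2m-3)!! = 2^(m-1)·Γ(m-1/2)/√π` (for `m ≥ 1`),
with the convention `(-1)!! = 1`. -/
noncomputable def oddDFac (m : ℕ) : ℝ :=
  2 ^ ((m : ℤ) - 1) * Real.Gamma ((m : ℝ) - 1 / 2) / Real.sqrt Real.pi

/-- The sequence `u_n := (-1)^n·[Σ_{m=1}^n (-1)^m·A_{nm}·log(|B_{2m}|/(2m-3)!!)
+ (1/(2A_{n0}))·log(2π)]`. -/
noncomputable def uSeq (n : ℕ) : ℝ :=
  (-1 : ℝ) ^ n * ((∑ m ∈ Finset.Icc 1 n, (-1 : ℝ) ^ m * Acoef n m *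
      Real.log (|(bernoulli (2 * m) : ℝ)| / oddDFac m)) +
    1 / (2 * Acoef n 0) * Real.log (2 * Real.pi))

noncomputable def Bc (n m : ℕ) : ℝ :=
  Real.Gamma ((n : ℝ) + m + 1 / 2) /
    ((Nat.factorial (n - m) : ℝ) * (Nat.factorial m : ℝ) * Real.Gamma ((m : ℝ) + 1 / 2))

lemma Bc_pos (n m : ℕ) : 0 < Bc n m := by
  have h1 : (0:ℝ) < Real.Gamma ((n:ℝ)+m+1/2) := Real.Gamma_pos_of_pos (by positivity)
  have h2 : (0:ℝ) < Real.Gamma ((m:ℝ)+1/2) := Real.Gamma_pos_of_pos (by positivity)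
  have h3 : (0:ℝ) < (Nat.factorial (n - m) : ℝ) := by exact_mod_cast (n-m).factorial_pos
  have h4 : (0:ℝ) < (Nat.factorial m : ℝ) := by exact_mod_cast m.factorial_pos
  unfold Bc; positivity

lemma Acoef_eq (n m : ℕ) : Acoef n m = Bc n m / (2 * (m:ℝ) - 1) := by
  unfold Acoef Bc
  rw [div_div]
  congr 1
  ring

lemma r1 {n m : ℕ} (h : m ≤ n) :
    ((n:ℝ) + 1 - m) * Bc (n+1) m = ((n:ℝ) + m + 1/2) * Bc n m := by
  have hfac : (Nat.factorial (n+1-m) : ℝ) = ((n:ℝ)+1-m) * (Nat.factorial (n-m) : ℝ) := by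
    have h2 : n+1-m = (n-m)+1 := by omega
    have h3 : ((n-m : ℕ) : ℝ) = (n:ℝ) - m := by rw [Nat.cast_sub h]
    rw [h2, Nat.factorial_succ]
    push_cast [h3]; ring
  have hg : Real.Gamma ((n:ℝ)+1+m+1/2) = ((n:ℝ)+m+1/2) * Real.Gamma ((n:ℝ)+m+1/2) := by
    rw [show (n:ℝ)+1+m+1/2 = ((n:ℝ)+m+1/2)+1 by ring,
      Real.Gamma_add_one (by positivity : ((n:ℝ)+m+1/2) ≠ 0)]
  have hnm : ((n:ℝ)+1-(m:ℝ)) ≠ 0 := by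
    have : (m:ℝ) ≤ n := by exact_mod_cast h
    nlinarith
  have hf1 : (Nat.factorial (n-m) : ℝ) ≠ 0 := by exact_mod_cast (n-m).factorial_ne_zero
  have hf2 : (Nat.factorial m : ℝ) ≠ 0 := by exact_mod_cast m.factorial_ne_zero
  have hgg : Real.Gamma ((m:ℝ)+1/2) ≠ 0 :=
    ne_of_gt (Real.Gamma_pos_of_pos (by positivity))
  unfold Bc
  push_cast
  rw [hg, hfac]
  field_simp

lemma r2 {n m : ℕ} (h1 : 1 ≤ m) (h2 : m ≤ n) :
    ((n:ℝ)+1-m) * ((n:ℝ)+m-1/2) * Bc n (m-1) = (m:ℝ) * ((m:ℝ)-1/2) * Bc n m := by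
  have hm : ((m-1 : ℕ) : ℝ) = (m:ℝ) - 1 := by
    rw [Nat.cast_sub h1]; norm_num
  have hm1 : (1:ℝ) ≤ (m:ℝ) := by exact_mod_cast h1
  have hfac1 : (Nat.factorial (n-(m-1)) : ℝ) = ((n:ℝ)+1-m) * (Nat.factorial (n-m) : ℝ) := by
    have e : n-(m-1) = (n-m)+1 := by omega
    have h3 : ((n-m : ℕ) : ℝ) = (n:ℝ) - m := by rw [Nat.cast_sub h2]
    rw [e, Nat.factorial_succ]
    push_cast [h3]; ring
  have hfac2 : (Nat.factorial m : ℝ) = (m:ℝ) * (Nat.factorial (m-1) : ℝ) := by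
    have e : m = (m-1)+1 := by omega
    nth_rewrite 1 [e]
    rw [Nat.factorial_succ]
    push_cast [hm]; ring
  have e1 : Real.Gamma ((n:ℝ)+m+1/2)
      = ((n:ℝ)+m-1/2) * Real.Gamma ((n:ℝ)+((m-1:ℕ):ℝ)+1/2) := by
    have hne : ((n:ℝ)+((m-1:ℕ):ℝ)+1/2) ≠ 0 := by positivity
    rw [show (n:ℝ)+m+1/2 = ((n:ℝ)+((m-1:ℕ):ℝ)+1/2)+1 by rw [hm]; ring,
      Real.Gamma_add_one hne, hm]
    ring
  have e2 : Real.Gamma ((m:ℝ)+1/2)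
      = ((m:ℝ)-1/2) * Real.Gamma (((m-1:ℕ):ℝ)+1/2) := by
    have hne : (((m-1:ℕ):ℝ)+1/2) ≠ 0 := by positivity
    rw [show (m:ℝ)+1/2 = (((m-1:ℕ):ℝ)+1/2)+1 by rw [hm]; ring,
      Real.Gamma_add_one hne, hm]
    ring
  have hg1 : Real.Gamma ((n:ℝ)+((m-1:ℕ):ℝ)+1/2) ≠ 0 := by
    exact ne_of_gt (Real.Gamma_pos_of_pos (by positivity))
  have hg2 : Real.Gamma (((m-1:ℕ):ℝ)+1/2) ≠ 0 := by
    exact ne_of_gt (Real.Gamma_pos_of_pos (by positivity))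
  have hf1 : (Nat.factorial (n-m) : ℝ) ≠ 0 := by
    exact_mod_cast (n-m).factorial_ne_zero
  have hf2 : (Nat.factorial (m-1) : ℝ) ≠ 0 := by
    exact_mod_cast (m-1).factorial_ne_zero
  have hnm : ((n:ℝ)+1-(m:ℝ)) ≠ 0 := by
    have : (m:ℝ) ≤ n := by exact_mod_cast h2
    nlinarith
  have hmhalf : ((m:ℝ)-1/2) ≠ 0 := by nlinarith
  unfold Bc
  rw [hfac1, hfac2, e1, e2, ← mul_div_assoc, ← mul_div_assoc,
    div_eq_div_iff (by positivity) (by positivity)]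
  ring

lemma rlast (n : ℕ) :
    (2*(n:ℝ)+2) * (2*(n:ℝ)+1) * Bc (n+1) (n+1) = (4*(n:ℝ)+3) * (4*(n:ℝ)+1) * Bc n n := by
  have eA : Real.Gamma (((n:ℝ)+1)+((n:ℝ)+1)+1/2)
      = (2*(n:ℝ)+3/2) * ((2*(n:ℝ)+1/2) * Real.Gamma ((n:ℝ)+(n:ℝ)+1/2)) := by
    rw [show ((n:ℝ)+1)+((n:ℝ)+1)+1/2 = ((2*(n:ℝ)+3/2))+1 by ring,
      Real.Gamma_add_one (by positivity),
      show (2*(n:ℝ)+3/2) = (2*(n:ℝ)+1/2)+1 by ring,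
      Real.Gamma_add_one (by positivity)]
    ring_nf
  have eC : Real.Gamma (((n:ℝ)+1)+1/2) = ((n:ℝ)+1/2) * Real.Gamma ((n:ℝ)+1/2) := by
    rw [show ((n:ℝ)+1)+1/2 = ((n:ℝ)+1/2)+1 by ring, Real.Gamma_add_one (by positivity)]
  unfold Bc
  rw [Nat.sub_self, Nat.sub_self]
  push_cast [Nat.factorial_succ]
  rw [eA, eC, ← mul_div_assoc, ← mul_div_assoc, div_eq_div_iff (by positivity) (by positivity)]
  ring

noncomputable def Hg (n m : ℕ) : ℝ :=
  (-1:ℝ)^m * Bc n m * ((4*(n:ℝ)+3)*(2*(m:ℝ)+2*(n:ℝ)+1))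

noncomputable def hh (n : ℕ) : ℕ → ℝ
  | 0 => 0
  | (m+1) => Hg n m

lemma Acoef_mul (n m : ℕ) : Acoef n m * (2*(m:ℝ)-1) = Bc n m := by
  rw [Acoef_eq]
  have h : (2*(m:ℝ)-1) ≠ 0 := by
    rcases Nat.eq_zero_or_pos m with h|h
    · subst h; norm_num
    · have : (1:ℝ) ≤ m := by exact_mod_cast h
      nlinarith
  field_simp

lemma stepB {n m : ℕ} (h : m ≤ n) :
    ((-1:ℝ)^m * Bc (n+1) m + (-1:ℝ)^m * Bc n m) * ((2*(n:ℝ)+1)*(2*(n:ℝ)+2))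
      = hh n (m+1) - hh n m := by
  match m with
  | 0 =>
    have A := r1 (n := n) (m := 0) (Nat.zero_le n)
    simp only [hh, Hg]
    push_cast at A ⊢
    linear_combination (2*(2*(n:ℝ)+1)) * A
  | (k+1) =>
    have A := r1 h
    have C := r2 (n := n) (m := k+1) (Nat.le_add_left 1 k) h
    simp only [Nat.add_sub_cancel] at C
    have hc : (((n:ℝ)+1-(↑k+1)) * ((n:ℝ)+(↑k+1)-1/2)) ≠ 0 := by
      have h1 : (k:ℝ)+1 ≤ n := by exact_mod_cast h
      have hk : (0:ℝ) ≤ k := Nat.cast_nonneg k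
      have e1 : ((n:ℝ)+1-(↑k+1)) > 0 := by nlinarith
      have e2 : ((n:ℝ)+(↑k+1)-1/2) > 0 := by nlinarith
      positivity
    simp only [hh, Hg]
    refine mul_left_cancel₀ hc ?_
    push_cast at A C ⊢
    linear_combination (((n:ℝ)+(k:ℝ)+1/2)*((2*(n:ℝ)+1)*(2*(n:ℝ)+2))*((-1:ℝ)^(k+1))) * A
      - ((4*(n:ℝ)+3)*(2*((k:ℝ)+1)+2*(n:ℝ)-1)*((-1:ℝ)^(k+1))) * C

lemma stepA {n m : ℕ} (h : m ≤ n) :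
    ((2*(n:ℝ)+1) * ((-1:ℝ)^m * Acoef (n+1) m) - (2*(n:ℝ)+2) * ((-1:ℝ)^m * Acoef n m))
        * ((2*(n:ℝ)+1)*(2*(n:ℝ)+2))
      = hh n (m+1) - hh n m := by
  have hAz := Acoef_mul (n+1) m
  have hAx := Acoef_mul n m
  match m with
  | 0 =>
    have A := r1 (n := n) (m := 0) (Nat.zero_le n)
    have hAz := Acoef_mul (n+1) 0
    have hAx := Acoef_mul n 0
    simp only [hh, Hg]
    push_cast at A hAz hAx ⊢
    linear_combination (-2*(2*(n:ℝ)+1)^2) * A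
      - ((2*(n:ℝ)+1)*((2*(n:ℝ)+1)*(2*(n:ℝ)+2))) * hAz
      + ((2*(n:ℝ)+2)*((2*(n:ℝ)+1)*(2*(n:ℝ)+2))) * hAx
  | (k+1) =>
    have A := r1 h
    have C := r2 (n := n) (m := k+1) (Nat.le_add_left 1 k) h
    have hAz := Acoef_mul (n+1) (k+1)
    have hAx := Acoef_mul n (k+1)
    simp only [Nat.add_sub_cancel] at C
    have hc : (((n:ℝ)+1-((k:ℝ)+1)) * ((n:ℝ)+((k:ℝ)+1)-1/2) * (2*((k:ℝ)+1)-1)) ≠ 0 := by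
      have h1 : (k:ℝ)+1 ≤ n := by exact_mod_cast h
      have hk : (0:ℝ) ≤ k := Nat.cast_nonneg k
      have e1 : ((n:ℝ)+1-((k:ℝ)+1)) > 0 := by nlinarith
      have e2 : ((n:ℝ)+((k:ℝ)+1)-1/2) > 0 := by nlinarith
      have e3 : (2*((k:ℝ)+1)-1) > 0 := by nlinarith
      positivity
    simp only [hh, Hg]
    refine mul_left_cancel₀ hc ?_
    push_cast at A C hAz hAx ⊢
    linear_combination
      (((-1:ℝ)^(k+1))*(2*(n:ℝ)+1)*((2*(n:ℝ)+1)*(2*(n:ℝ)+2))*((n:ℝ)+(k:ℝ)+1/2)) * A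
      - (((-1:ℝ)^(k+1))*(2*(k:ℝ)+1)*(4*(n:ℝ)+3)*(2*(k:ℝ)+2*(n:ℝ)+1)) * C
      + (((-1:ℝ)^(k+1))*(2*(n:ℝ)+1)*((2*(n:ℝ)+1)*(2*(n:ℝ)+2))*((n:ℝ)-(k:ℝ))*((n:ℝ)+(k:ℝ)+1/2)) * hAz
      - (((-1:ℝ)^(k+1))*(2*(n:ℝ)+2)*((2*(n:ℝ)+1)*(2*(n:ℝ)+2))*((n:ℝ)-(k:ℝ))*((n:ℝ)+(k:ℝ)+1/2)) * hAx

lemma Gamma_half_ne : Real.Gamma (1/2 : ℝ) ≠ 0 :=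
  ne_of_gt (Real.Gamma_pos_of_pos (by norm_num))

lemma Bc00 : Bc 0 0 = 1 := by
  unfold Bc
  norm_num
  exact Gamma_half_ne

lemma hlastB (n : ℕ) :
    ((-1:ℝ)^(n+1) * Bc (n+1) (n+1)) * ((2*(n:ℝ)+1)*(2*(n:ℝ)+2)) = -(Hg n n) := by
  unfold Hg
  linear_combination ((-1:ℝ)^(n+1)) * rlast n

lemma sumB (n : ℕ) : ∑ m ∈ Finset.range (n+1), (-1:ℝ)^m * Bc n m = (-1:ℝ)^n := by
  induction n with
  | zero => simpa using Bc00
  | succ n ih =>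
    have hD0 : ((2*(n:ℝ)+1)*(2*(n:ℝ)+2)) ≠ 0 := by positivity
    apply mul_right_cancel₀ hD0
    rw [Finset.sum_range_succ, add_mul, Finset.sum_mul]
    have e1 : ∑ m ∈ Finset.range (n+1), ((-1:ℝ)^m * Bc (n+1) m) * ((2*(n:ℝ)+1)*(2*(n:ℝ)+2))
        = ∑ m ∈ Finset.range (n+1),
            ((hh n (m+1) - hh n m) - ((-1:ℝ)^m * Bc n m) * ((2*(n:ℝ)+1)*(2*(n:ℝ)+2))) := by
      refine Finset.sum_congr rfl fun m hm => ?_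
      have hm' : m ≤ n := Nat.lt_succ_iff.mp (Finset.mem_range.mp hm)
      linear_combination stepB hm'
    rw [e1, Finset.sum_sub_distrib, Finset.sum_range_sub (hh n), ← Finset.sum_mul, ih, hlastB n]
    show Hg n n - hh n 0 - (-1:ℝ)^n * ((2*(n:ℝ)+1)*(2*(n:ℝ)+2)) + -(Hg n n) = _
    simp only [hh]
    ring

lemma sumA (n : ℕ) :
    (∑ m ∈ Finset.range (n+1), (-1:ℝ)^m * Acoef n m) * Acoef n 0 = 1 := by
  induction n with
  | zero =>
    have h := Acoef_mul 0 0
    have hb := Bc00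
    push_cast at h
    norm_num [Finset.sum_range_one]
    nlinarith [h, hb]
  | succ n ih =>
    have hD0 : ((2*(n:ℝ)+1)*(2*(n:ℝ)+2)) ≠ 0 := by positivity
    have hlastA : ((2*(n:ℝ)+1) * ((-1:ℝ)^(n+1) * Acoef (n+1) (n+1)))
          * ((2*(n:ℝ)+1)*(2*(n:ℝ)+2)) = -(Hg n n) := by
      have hm := Acoef_mul (n+1) (n+1)
      push_cast at hm
      have hb := hlastB n
      linear_combination hb + (((-1:ℝ)^(n+1)) * ((2*(n:ℝ)+1)*(2*(n:ℝ)+2))) * hm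
    have hS : (2*(n:ℝ)+1) * (∑ m ∈ Finset.range (n+2), (-1:ℝ)^m * Acoef (n+1) m)
        = (2*(n:ℝ)+2) * (∑ m ∈ Finset.range (n+1), (-1:ℝ)^m * Acoef n m) := by
      apply mul_right_cancel₀ hD0
      rw [Finset.mul_sum, Finset.mul_sum, Finset.sum_mul, Finset.sum_mul,
        Finset.sum_range_succ, hlastA]
      have e1 : ∑ m ∈ Finset.range (n+1),
            ((2*(n:ℝ)+1) * ((-1:ℝ)^m * Acoef (n+1) m)) * ((2*(n:ℝ)+1)*(2*(n:ℝ)+2))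
          = ∑ m ∈ Finset.range (n+1),
              ((hh n (m+1) - hh n m)
                + ((2*(n:ℝ)+2) * ((-1:ℝ)^m * Acoef n m)) * ((2*(n:ℝ)+1)*(2*(n:ℝ)+2))) := by
        refine Finset.sum_congr rfl fun m hm => ?_
        have hm' : m ≤ n := Nat.lt_succ_iff.mp (Finset.mem_range.mp hm)
        linear_combination stepA hm'
      rw [e1, Finset.sum_add_distrib, Finset.sum_range_sub (hh n)]
      show hh n (n+1) - hh n 0 + _ + _ = _
      simp only [hh]
      ring
    have hA0 : (2*(n:ℝ)+2) * Acoef (n+1) 0 = (2*(n:ℝ)+1) * Acoef n 0 := by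
      have h1 := Acoef_mul (n+1) 0
      have h2 := Acoef_mul n 0
      have h3 := r1 (n := n) (m := 0) (Nat.zero_le n)
      push_cast at h1 h2 h3
      linear_combination (-(2*(n:ℝ)+2)) * h1 + (2*(n:ℝ)+1) * h2 + (-2:ℝ) * h3
    refine mul_left_cancel₀ hD0 ?_
    calc ((2*(n:ℝ)+1)*(2*(n:ℝ)+2))
          * ((∑ m ∈ Finset.range (n+2), (-1:ℝ)^m * Acoef (n+1) m) * Acoef (n+1) 0)
        = ((2*(n:ℝ)+1)*(2*(n:ℝ)+2))
          * ((∑ m ∈ Finset.range (n+1), (-1:ℝ)^m * Acoef n m) * Acoef n 0) := by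
          linear_combination ((2*(n:ℝ)+2) * Acoef (n+1) 0) * hS
            + ((2*(n:ℝ)+2) * (∑ m ∈ Finset.range (n+1), (-1:ℝ)^m * Acoef n m)) * hA0
      _ = ((2*(n:ℝ)+1)*(2*(n:ℝ)+2)) * 1 := by rw [ih]

lemma Gamma_nat_add_half (k : ℕ) :
    Real.Gamma ((k:ℝ)+1/2)
      = Real.sqrt Real.pi * ((2*k).factorial : ℝ) / (4^k * (k.factorial : ℝ)) := by
  induction k with
  | zero =>
    rw [show ((0:ℕ):ℝ)+1/2 = 1/2 by norm_num, Real.Gamma_one_half_eq]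
    simp
  | succ k ih =>
    have hg : Real.Gamma (((k:ℝ)+1)+1/2) = ((k:ℝ)+1/2) * Real.Gamma ((k:ℝ)+1/2) := by
      rw [show ((k:ℝ)+1)+1/2 = ((k:ℝ)+1/2)+1 by ring, Real.Gamma_add_one (by positivity)]
    have f1 : ((2*(k+1)).factorial : ℝ)
        = (2*(k:ℝ)+2) * ((2*(k:ℝ)+1) * ((2*k).factorial : ℝ)) := by
      rw [show 2*(k+1) = (2*k+1)+1 by ring, Nat.factorial_succ, Nat.factorial_succ]
      push_cast; ring
    have f2 : (((k+1)).factorial : ℝ) = ((k:ℝ)+1) * (k.factorial : ℝ) := by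
      rw [Nat.factorial_succ]; push_cast; ring
    have h4 : ((4:ℝ))^k ≠ 0 := by positivity
    have hkf : (k.factorial : ℝ) ≠ 0 := by exact_mod_cast k.factorial_ne_zero
    push_cast
    rw [hg, ih, f1, f2, ← mul_div_assoc, div_eq_div_iff (by positivity) (by positivity)]
    ring

lemma oddDFac_pos {m : ℕ} (hm : 1 ≤ m) : 0 < oddDFac m := by
  have h1 : (1:ℝ) ≤ m := by exact_mod_cast hm
  have hg : 0 < Real.Gamma ((m:ℝ)-1/2) := Real.Gamma_pos_of_pos (by nlinarith)
  have h2 : (0:ℝ) < 2 ^ ((m:ℤ)-1) := zpow_pos (by norm_num) _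
  have h3 : (0:ℝ) < Real.sqrt Real.pi := Real.sqrt_pos.mpr Real.pi_pos
  unfold oddDFac
  positivity

lemma oddDFac_eq {m : ℕ} (hm : 1 ≤ m) :
    oddDFac m = ((2*(m-1)).factorial : ℝ) / (2^(m-1) * ((m-1).factorial : ℝ)) := by
  obtain ⟨k, rfl⟩ : ∃ k, m = k+1 := ⟨m-1, (Nat.succ_pred_eq_of_pos hm).symm⟩
  have e1 : ((k+1:ℕ):ℤ) - 1 = (k:ℤ) := by push_cast; ring
  have e2 : (((k+1):ℕ):ℝ) - 1/2 = (k:ℝ) + 1/2 := by push_cast; ring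
  unfold oddDFac
  rw [e1, e2, _root_.Gamma_nat_add_half k, Nat.add_sub_cancel]
  have hs : Real.sqrt Real.pi ≠ 0 := ne_of_gt (Real.sqrt_pos.mpr Real.pi_pos)
  have hkf : (k.factorial : ℝ) ≠ 0 := by exact_mod_cast k.factorial_ne_zero
  have h2 : ((2:ℝ))^k ≠ 0 := by positivity
  have h4 : ((4:ℝ))^k ≠ 0 := by positivity
  rw [zpow_natCast]
  field_simp
  rw [show (4:ℝ) = 2*2 by norm_num, mul_pow]
  ring

lemma zeta_val_ge_one {m : ℕ} (hm : 1 ≤ m) :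
    (1:ℝ) ≤ (-1:ℝ)^(m+1) * (2:ℝ)^(2*m-1) * (Real.pi)^(2*m)
      * ((bernoulli (2*m) : ℚ) : ℝ) / ((2*m).factorial : ℝ) := by
  have hz := hasSum_zeta_nat (k := m) (by omega)
  have h1 := le_hasSum hz 1 (fun j _ => by positivity)
  simpa using h1

lemma bernoulli_sign {m : ℕ} (hm : 1 ≤ m) :
    0 < (-1:ℝ)^(m+1) * ((bernoulli (2*m) : ℚ) : ℝ) := by
  have h := zeta_val_ge_one hm
  have h2 : (0:ℝ) < (2:ℝ)^(2*m-1) := by positivity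
  have h3 : (0:ℝ) < (Real.pi)^(2*m) := by positivity
  have h4 : (0:ℝ) < ((2*m).factorial : ℝ) := by exact_mod_cast (2*m).factorial_pos
  set s : ℝ := (-1:ℝ)^(m+1) * ((bernoulli (2*m) : ℚ) : ℝ) with hs
  by_contra hneg
  push_neg at hneg
  have : (-1:ℝ)^(m+1) * (2:ℝ)^(2*m-1) * (Real.pi)^(2*m)
      * ((bernoulli (2*m) : ℚ) : ℝ) / ((2*m).factorial : ℝ)
      = s * ((2:ℝ)^(2*m-1) * (Real.pi)^(2*m) / ((2*m).factorial : ℝ)) := by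
    rw [hs]; ring
  rw [this] at h
  nlinarith [mul_nonpos_of_nonpos_of_nonneg hneg
    (le_of_lt (by positivity : (0:ℝ) < (2:ℝ)^(2*m-1) * (Real.pi)^(2*m) / ((2*m).factorial : ℝ)))]

lemma bernoulli_abs {m : ℕ} (hm : 1 ≤ m) :
    |((bernoulli (2*m) : ℚ) : ℝ)| = (-1:ℝ)^(m+1) * ((bernoulli (2*m) : ℚ) : ℝ) := by
  have h := bernoulli_sign hm
  rcases Nat.even_or_odd (m+1) with he | ho
  · rw [he.neg_one_pow] at h ⊢
    rw [one_mul] at h ⊢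
    exact abs_of_pos h
  · rw [ho.neg_one_pow] at h ⊢
    have : ((bernoulli (2*m) : ℚ) : ℝ) < 0 := by nlinarith
    rw [abs_of_neg this]; ring

lemma twoXi_eval {m : ℕ} (hm : 1 ≤ m) :
    twoXi (2 * (m:ℂ))
      = (((2*(m:ℝ)) * (2*(m:ℝ)-1) * (((Real.pi)^m)⁻¹) * (((m-1).factorial : ℝ))
          * ((-1:ℝ)^(m+1) * (2:ℝ)^(2*m-1) * (Real.pi)^(2*m)
              * ((bernoulli (2*m) : ℚ) : ℝ) / ((2*m).factorial : ℝ)) : ℝ) : ℂ) := by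
  have hzeta : riemannZeta (2 * (m:ℂ))
      = (-1:ℂ)^(m+1) * (2:ℂ)^(2*m-1) * (Real.pi:ℂ)^(2*m)
          * ((bernoulli (2*m) : ℚ) : ℂ) / ((2*m).factorial : ℂ) := by
    have := riemannZeta_two_mul_nat (k := m) (by omega)
    rw [this]
  have hpow : (Real.pi:ℂ) ^ (-(2 * (m:ℂ)) / 2) = (((Real.pi:ℂ))^m)⁻¹ := by
    rw [show (-(2 * (m:ℂ)) / 2) = -((m:ℕ):ℂ) by push_cast; ring, Complex.cpow_neg,
      Complex.cpow_natCast]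
  have hGamma : Complex.Gamma (2 * (m:ℂ) / 2) = (((m-1).factorial : ℕ) : ℂ) := by
    rw [show (2 * (m:ℂ) / 2) = ((m-1:ℕ):ℂ) + 1 by
      push_cast [Nat.cast_sub hm]; ring]
    exact Complex.Gamma_nat_eq_factorial (m-1)
  unfold twoXi
  rw [hpow, hGamma, hzeta]
  push_cast
  ring

lemma twoXi_re {m : ℕ} (hm : 1 ≤ m) :
    (twoXi (2 * (m:ℂ))).re
      = (2*Real.pi)^m * (|((bernoulli (2*m) : ℚ) : ℝ)| / oddDFac m) := by
  rw [twoXi_eval hm, Complex.ofReal_re]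
  rw [bernoulli_abs hm, oddDFac_eq hm]
  obtain ⟨k, rfl⟩ : ∃ k, m = k+1 := ⟨m-1, (Nat.succ_pred_eq_of_pos hm).symm⟩
  simp only [Nat.add_sub_cancel]
  have f1 : ((2*(k+1)).factorial : ℝ)
      = (2*(k:ℝ)+2) * ((2*(k:ℝ)+1) * ((2*k).factorial : ℝ)) := by
    rw [show 2*(k+1) = (2*k+1)+1 by ring, Nat.factorial_succ, Nat.factorial_succ]
    push_cast; ring
  have e2 : 2*(k+1)-1 = 2*k+1 := by omega
  have hfk : ((2*k).factorial : ℝ) ≠ 0 := by exact_mod_cast (2*k).factorial_ne_zero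
  have hkf : (k.factorial : ℝ) ≠ 0 := by exact_mod_cast k.factorial_ne_zero
  have hpi : (Real.pi) ≠ 0 := ne_of_gt Real.pi_pos
  have h2k : ((2:ℝ))^k ≠ 0 := by positivity
  have hpik : ((Real.pi))^(k+1) ≠ 0 := by positivity
  rw [f1, e2]
  have hb : ((bernoulli (2*(k+1)) : ℚ) : ℝ) = ((bernoulli (2*(k+1)) : ℚ) : ℝ) := rfl
  push_cast
  rw [pow_succ, pow_succ, pow_succ]
  field_simp
  ring

lemma Acoef_zero_ne (n : ℕ) : Acoef n 0 ≠ 0 := by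
  have h := Acoef_mul n 0
  have hb := Bc_pos n 0
  intro h0
  rw [h0] at h
  norm_num at h
  nlinarith

lemma key (n : ℕ) :
    ∑ m ∈ Finset.Icc 1 n, (-1:ℝ)^m * Acoef n m * (m:ℝ)
      = (-1:ℝ)^n/2 + 1/(2*Acoef n 0) := by
  have hA0 := Acoef_zero_ne n
  have hIcc : ∑ m ∈ Finset.range (n+1), (-1:ℝ)^m * Acoef n m * (m:ℝ)
      = ∑ m ∈ Finset.Icc 1 n, (-1:ℝ)^m * Acoef n m * (m:ℝ) := by
    rw [Finset.range_eq_Ico, Finset.sum_eq_sum_Ico_succ_bot (Nat.succ_pos n)]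
    rw [Nat.succ_eq_add_one, Finset.Ico_add_one_right_eq_Icc]
    norm_num
  rw [← hIcc]
  have hS2 : ∑ m ∈ Finset.range (n+1), (-1:ℝ)^m * Acoef n m = 1 / Acoef n 0 := by
    rw [eq_div_iff hA0]
    exact sumA n
  calc ∑ m ∈ Finset.range (n+1), (-1:ℝ)^m * Acoef n m * (m:ℝ)
      = ∑ m ∈ Finset.range (n+1),
          (((-1:ℝ)^m * Bc n m + (-1:ℝ)^m * Acoef n m)/2) := by
        refine Finset.sum_congr rfl fun m _ => ?_
        linear_combination ((-1:ℝ)^m / 2) * Acoef_mul n m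
    _ = ((∑ m ∈ Finset.range (n+1), (-1:ℝ)^m * Bc n m)
        + (∑ m ∈ Finset.range (n+1), (-1:ℝ)^m * Acoef n m))/2 := by
        rw [← Finset.sum_div, Finset.sum_add_distrib]
    _ = ((-1:ℝ)^n + 1/Acoef n 0)/2 := by rw [sumB n, hS2]
    _ = (-1:ℝ)^n/2 + 1/(2*Acoef n 0) := by
        field_simp

lemma log_twoXi {m : ℕ} (hm : 1 ≤ m) :
    Real.log ((twoXi (2 * (m:ℂ))).re)
      = (m:ℝ) * Real.log (2*Real.pi)
        + Real.log (|((bernoulli (2*m) : ℚ) : ℝ)| / oddDFac m) := by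
  have hBne : |((bernoulli (2*m) : ℚ) : ℝ)| > 0 := by
    have h := bernoulli_sign hm
    rcases Nat.even_or_odd (m+1) with he | ho
    · rw [he.neg_one_pow, one_mul] at h
      exact abs_pos.mpr (ne_of_gt h)
    · rw [ho.neg_one_pow] at h
      exact abs_pos.mpr (ne_of_lt (by nlinarith))
  have hodd := oddDFac_pos hm
  have hq : |((bernoulli (2*m) : ℚ) : ℝ)| / oddDFac m > 0 := by positivity
  have h2pi : (0:ℝ) < (2*Real.pi)^m := by positivity
  rw [twoXi_re hm, Real.log_mul (ne_of_gt h2pi) (ne_of_gt hq), Real.log_pow]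

/-- For every integer `n ≥ 1`, `Λ_n = (1/2)·log(2π) + u_n`. -/
theorem stmt_8 (n : ℕ) (hn : 1 ≤ n) :
    LambdaSeq n = 1 / 2 * Real.log (2 * Real.pi) + uSeq n := by
  unfold LambdaSeq uSeq
  have hsplit : ∑ m ∈ Finset.Icc 1 n, (-1:ℝ)^m * Acoef n m * Real.log ((twoXi (2 * m)).re)
      = (∑ m ∈ Finset.Icc 1 n, (-1:ℝ)^m * Acoef n m * (m:ℝ)) * Real.log (2*Real.pi)
        + ∑ m ∈ Finset.Icc 1 n, (-1:ℝ)^m * Acoef n m *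
            Real.log (|(bernoulli (2 * m) : ℝ)| / oddDFac m) := by
    rw [Finset.sum_mul, ← Finset.sum_add_distrib]
    refine Finset.sum_congr rfl fun m hm => ?_
    have h1m : 1 ≤ m := (Finset.mem_Icc.mp hm).1
    rw [log_twoXi h1m]
    ring
  rw [hsplit, key n]
  have hσ : ((-1:ℝ)^n)*((-1:ℝ)^n) = 1 := by
    rw [← pow_add, ← two_mul, pow_mul]; norm_num
  linear_combination (Real.log (2*Real.pi)/2) * hσ
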